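/- Let A ∈ ℝ^{n×n} and B ∈ ℝ^{n×m} be such that there exists K ∈ ℝ^{m×n} with (A+BK)^k → 0 as k → ∞, let 𝒞 ⊆ ℝ^{n+m} be a proper C-set, and let ℒ ⊆ ℝⁿ be a proper C-set verifying the control Lyapunov decrease condition (for every x ∈ ℝⁿ there exists u ∈ ℝᵐ with γ(ℒ, Ax+Bu) + γ(𝒞, (x,u)) ≤ γ(ℒ, x)). Let (𝒫̲_k)_{k≥1} be the lower iterates obtained from the initial polar S = {0} (𝒫̲₁ = P_x(𝒞* ⊕ Mᵀ{0})* = P_x𝒞, 𝒫̲_{k+1} = P_x(𝒞* ⊕ Mᵀ(𝒫̲_k)*)*), and let (𝒫̄_k)_{k≥1} be the upper iterates obtained from the initial polar S = ℒ* (𝒫̄₁ = P_x(𝒞* ⊕ Mᵀℒ*)*, 𝒫̄_{k+1} = P_x(𝒞* ⊕ Mᵀ(𝒫̄_k)*)*). If 𝒫̲_k converges in Hausdorff distance to a proper C-set 𝒫̲_∞ and 𝒫̄_k converges in Hausdorff distance to a proper C-set 𝒫̄_∞, then 𝒫̲_∞ = 𝒫̄_∞. -/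

import Mathlib

open Pointwise Filter Topology Matrix Metric
open scoped RealInnerProductSpace

noncomputable section

/-- ℝⁿ with the standard (Euclidean) inner product. -/
abbrev Rsp (n : ℕ) := EuclideanSpace ℝ (Fin n)

/-- ℝ^{n+m} realized as the L²-product ℝⁿ × ℝᵐ. -/
abbrev Rsp2 (n m : ℕ) := WithLp 2 (Rsp n × Rsp m)

/-- A C-set: compact, convex, containing the origin. -/
def IsCSet {E : Type*} [NormedAddCommGroup E] [NormedSpace ℝ E] (X : Set E) : Prop :=
  IsCompact X ∧ Convex ℝ X ∧ (0 : E) ∈ X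

/-- A proper C-set: a C-set containing the origin in its interior. -/
def IsProperCSet {E : Type*} [NormedAddCommGroup E] [NormedSpace ℝ E] (X : Set E) : Prop :=
  IsCSet X ∧ (0 : E) ∈ interior X

/-- The polar set 𝒳* = {y : ⟨y,x⟩ ≤ 1 for all x ∈ 𝒳}. -/
def polarSet {E : Type*} [NormedAddCommGroup E] [InnerProductSpace ℝ E] (X : Set E) : Set E :=
  {y | ∀ x ∈ X, inner ℝ y x ≤ (1 : ℝ)}

/-- The Minkowski (gauge) function γ(𝒳,y) = inf{η ≥ 0 : y ∈ η𝒳}. -/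
def mgauge {E : Type*} [NormedAddCommGroup E] [NormedSpace ℝ E] (X : Set E) (y : E) : ℝ :=
  sInf {η : ℝ | 0 ≤ η ∧ y ∈ η • X}

variable {n m : ℕ}

/-- The map M = (A B) : ℝ^{n+m} → ℝⁿ, M(x,u) = Ax + Bu. -/
def Mfwd (A : Matrix (Fin n) (Fin n) ℝ) (B : Matrix (Fin n) (Fin m) ℝ) (w : Rsp2 n m) : Rsp n :=
  Matrix.toEuclideanLin A w.ofLp.1 + Matrix.toEuclideanLin B w.ofLp.2

/-- The transpose map Mᵀ : ℝⁿ → ℝ^{n+m}, Mᵀp = (Aᵀp, Bᵀp). -/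
def Mtr (A : Matrix (Fin n) (Fin n) ℝ) (B : Matrix (Fin n) (Fin m) ℝ) (p : Rsp n) : Rsp2 n m :=
  WithLp.toLp 2 (Matrix.toEuclideanLin Aᵀ p, Matrix.toEuclideanLin Bᵀ p)

/-- The projection P_x : ℝ^{n+m} → ℝⁿ, (x,u) ↦ x. -/
def Pxproj : Rsp2 n m → Rsp n := fun w => w.ofLp.1

/-! ### Generic lemmas -/
section Generic
variable {E : Type*} [NormedAddCommGroup E] [InnerProductSpace ℝ E] {X T : Set E}

lemma mgauge_eq_gauge (hX : X.Nonempty) : mgauge X = gauge X := by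
  funext y
  rcases eq_or_ne y 0 with rfl | hy
  · rw [gauge_zero]
    refine le_antisymm (csInf_le ⟨0, fun η hη => hη.1⟩ ?_) (le_csInf ⟨0, ?_⟩ fun η hη => hη.1)
    · exact ⟨le_refl 0, by rw [Set.zero_smul_set hX]; exact rfl⟩
    · exact ⟨le_refl 0, by rw [Set.zero_smul_set hX]; exact rfl⟩
  · unfold mgauge gauge
    congr 1
    ext η
    simp only [Set.mem_setOf_eq, Set.mem_sep_iff, Set.mem_Ioi]
    constructor
    · rintro ⟨h0, hm⟩
      rcases h0.eq_or_lt with rfl | h0'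
      · rw [Set.zero_smul_set hX] at hm
        exact absurd hm hy
      · exact ⟨h0', hm⟩
    · rintro ⟨h0, hm⟩
      exact ⟨h0.le, hm⟩

lemma zero_mem_polarSet : (0 : E) ∈ polarSet X := by
  intro x _
  simp [inner_zero_left]

lemma inner_le_one_of_mem_polarSet {a y : E} (ha : a ∈ polarSet X) (hy : y ∈ X) :
    ⟪a, y⟫ ≤ 1 := ha y hy

lemma isClosed_polarSet : IsClosed (polarSet X) := by
  have : polarSet X = ⋂ x ∈ X, {y : E | ⟪y, x⟫ ≤ 1} := by
    ext y; simp [polarSet]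
  rw [this]
  exact isClosed_biInter fun x _ =>
    isClosed_le (Continuous.inner continuous_id continuous_const) continuous_const

lemma convex_polarSet : Convex ℝ (polarSet X) := by
  intro y hy z hz a b ha hb hab x hx
  have h1 := hy x hx
  have h2 := hz x hx
  have : ⟪a • y + b • z, x⟫ = a * ⟪y, x⟫ + b * ⟪z, x⟫ := by
    simp [inner_add_left, real_inner_smul_left]
  show (inner ℝ (a • y + b • z) x : ℝ) ≤ 1
  rw [this]
  nlinarith [h1, h2]

lemma polarSet_antitone (h : X ⊆ T) : polarSet T ⊆ polarSet X :=
  fun y hy x hx => hy x (h hx)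

lemma polarSet_subset_closedBall {R : ℝ} (hR : 0 < R) (h : closedBall (0 : E) R ⊆ X) :
    polarSet X ⊆ closedBall 0 R⁻¹ := by
  intro a ha
  rcases eq_or_ne a 0 with rfl | h0
  · simp [inv_nonneg.2 hR.le]
  · have hnorm : 0 < ‖a‖ := norm_pos_iff.2 h0
    have hx : (R / ‖a‖) • a ∈ X := by
      apply h
      rw [mem_closedBall, dist_zero_right, norm_smul, Real.norm_eq_abs,
        abs_of_pos (by positivity), div_mul_cancel₀ _ hnorm.ne']
    have h1 := ha _ hx
    rw [real_inner_smul_right, real_inner_self_eq_norm_sq] at h1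
    have h2 : R * ‖a‖ ≤ 1 := by
      have h3 : R / ‖a‖ * ‖a‖ ^ 2 = R * ‖a‖ := by field_simp
      linarith [h3 ▸ h1]
    rw [mem_closedBall, dist_zero_right, show R⁻¹ = 1 / R by ring, le_div_iff₀ hR]
    linarith [mul_comm R ‖a‖]
  
lemma closedBall_subset_polarSet {R : ℝ} (hR : 0 < R) (h : X ⊆ closedBall (0 : E) R) :
    closedBall (0 : E) R⁻¹ ⊆ polarSet X := by
  intro a ha x hx
  have h1 : ‖a‖ ≤ R⁻¹ := by rwa [mem_closedBall, dist_zero_right] at ha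
  have h2 : ‖x‖ ≤ R := by have := h hx; rwa [mem_closedBall, dist_zero_right] at this
  calc (inner ℝ a x : ℝ) ≤ ‖a‖ * ‖x‖ := real_inner_le_norm a x
    _ ≤ R⁻¹ * R := by gcongr
    _ = 1 := inv_mul_cancel₀ hR.ne'

lemma inner_le_gauge (habs : Absorbent ℝ X) {a : E} (ha : a ∈ polarSet X) (w : E) :
    ⟪a, w⟫ ≤ gauge X w := by
  by_contra hlt
  push_neg at hlt
  obtain ⟨b, hb0, hblt, hbmem⟩ := exists_lt_of_gauge_lt habs hlt
  obtain ⟨c, hc, rfl⟩ := hbmem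
  have : ⟪a, b • c⟫ ≤ b := by
    rw [real_inner_smul_right]
    calc b * ⟪a, c⟫ ≤ b * 1 := by
          have := ha c hc; nlinarith
      _ = b := mul_one b
  linarith

lemma bipolar_subset [CompleteSpace E] (hXc : IsClosed X) (hXv : Convex ℝ X)
    (h0 : (0 : E) ∈ X) : polarSet (polarSet X) ⊆ X := by
  intro w hw
  by_contra hws
  obtain ⟨f, u, hfs, hfw⟩ := geometric_hahn_banach_closed_point hXv hXc hws
  have hu : (0 : ℝ) < u := by simpa using hfs 0 h0
  set a := (InnerProductSpace.toDual ℝ E).symm (u⁻¹ • f) with ha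
  have hinner : ∀ x : E, ⟪a, x⟫ = u⁻¹ * f x := by
    intro x
    rw [ha, InnerProductSpace.toDual_symm_apply]
    rfl
  have haX : a ∈ polarSet X := by
    intro x hx
    rw [hinner]
    have := hfs x hx
    rw [show (1:ℝ) = u⁻¹ * u by field_simp]
    have hui : (0:ℝ) < u⁻¹ := by positivity
    nlinarith
  have := hw a haX
  rw [real_inner_comm, hinner] at this
  have : f w ≤ u := by
    calc f w = u * (u⁻¹ * f w) := by field_simp
      _ ≤ u * 1 := by nlinarith
      _ = u := mul_one u
  linarith

lemma gauge_le_of_forall_inner_le [CompleteSpace E] {R : ℝ} (hR : 0 < R)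
    (hXc : IsClosed X) (hXv : Convex ℝ X) (h0 : (0 : E) ∈ X)
    (hXb : X ⊆ closedBall (0 : E) R) {w : E} {s : ℝ} (hs : 0 ≤ s)
    (h : ∀ a ∈ polarSet X, ⟪a, w⟫ ≤ s) : gauge X w ≤ s := by
  rcases hs.eq_or_lt with rfl | hs'
  · have hw0 : w = 0 := by
      by_contra hw
      have hnorm : 0 < ‖w‖ := norm_pos_iff.2 hw
      have hmem : (R⁻¹ / ‖w‖) • w ∈ polarSet X := by
        apply closedBall_subset_polarSet hR hXb
        rw [mem_closedBall, dist_zero_right, norm_smul, Real.norm_eq_abs,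
          abs_of_pos (by positivity), div_mul_cancel₀ _ hnorm.ne']
      have := h _ hmem
      rw [real_inner_smul_left, real_inner_self_eq_norm_sq] at this
      have hpos : 0 < R⁻¹ / ‖w‖ * ‖w‖ ^ 2 := by positivity
      linarith
    simp [hw0, gauge_zero]
  · have hmem : s⁻¹ • w ∈ polarSet (polarSet X) := by
      intro a ha
      show (inner ℝ (s⁻¹ • w) a : ℝ) ≤ 1
      rw [real_inner_smul_left, real_inner_comm]
      have h1 : ⟪a, w⟫ ≤ s := h a ha
      have hsi : (0:ℝ) ≤ s⁻¹ := by positivity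
      calc s⁻¹ * ⟪a, w⟫ ≤ s⁻¹ * s := by nlinarith
        _ = 1 := inv_mul_cancel₀ hs'.ne'
    have hX : s⁻¹ • w ∈ X := bipolar_subset hXc hXv h0 hmem
    have h1 : gauge X (s⁻¹ • w) ≤ 1 := gauge_le_one_of_mem hX
    have h2 := gauge_smul_of_nonneg (a := s) hs'.le (s⁻¹ • w) (s := X)
    rw [smul_smul, mul_inv_cancel₀ hs'.ne', one_smul, smul_eq_mul] at h2
    rw [h2]
    nlinarith



lemma pc_compact (h : IsProperCSet X) : IsCompact X := h.1.1
lemma pc_convex (h : IsProperCSet X) : Convex ℝ X := h.1.2.1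
lemma pc_zero_mem (h : IsProperCSet X) : (0 : E) ∈ X := h.1.2.2
lemma pc_closed (h : IsProperCSet X) : IsClosed X := h.1.1.isClosed
lemma pc_nhds (h : IsProperCSet X) : X ∈ 𝓝 (0 : E) := mem_interior_iff_mem_nhds.mp h.2
lemma pc_absorbent (h : IsProperCSet X) : Absorbent ℝ X := absorbent_nhds_zero (pc_nhds h)
lemma pc_nonempty (h : IsProperCSet X) : X.Nonempty := ⟨0, pc_zero_mem h⟩

lemma pc_bounded (h : IsProperCSet X) : ∃ R : ℝ, 0 < R ∧ X ⊆ closedBall (0 : E) R := by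
  obtain ⟨r, hr⟩ := h.1.1.isBounded.subset_closedBall 0
  exact ⟨max r 1, lt_of_lt_of_le one_pos (le_max_right r 1),
    hr.trans (closedBall_subset_closedBall (le_max_left r 1))⟩

lemma pc_inner_ball (h : IsProperCSet X) : ∃ ρ : ℝ, 0 < ρ ∧ closedBall (0 : E) ρ ⊆ X := by
  obtain ⟨ε, hε, hsub⟩ := Metric.mem_nhds_iff.mp (pc_nhds h)
  exact ⟨ε / 2, by positivity, (closedBall_subset_ball (by linarith)).trans hsub⟩

lemma mem_smul_set_of_gauge_lt (hXv : Convex ℝ X) (h0 : (0 : E) ∈ X) (habs : Absorbent ℝ X)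
    {y : E} {s : ℝ} (h : gauge X y < s) : y ∈ s • X := by
  obtain ⟨b, hb0, hbs, hmem⟩ := exists_lt_of_gauge_lt habs h
  obtain ⟨c, hc, rfl⟩ := hmem
  have hs : 0 < s := hb0.trans hbs
  refine ⟨(b / s) • c, ?_, ?_⟩
  · have hb1 : b / s ≤ 1 := (div_le_one hs).2 hbs.le
    have hcc := hXv hc h0 (a := b / s) (b := 1 - b / s) (by positivity) (by linarith) (by ring)
    simpa using hcc
  · show s • (b / s) • c = b • c
    rw [smul_smul, mul_div_cancel₀ _ hs.ne']

lemma mem_of_gauge_le_one (hXv : Convex ℝ X) (hnhds : X ∈ 𝓝 (0 : E)) (hcl : IsClosed X)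
    {y : E} (h : gauge X y ≤ 1) : y ∈ X := by
  have := (gauge_le_one_iff_mem_closure hXv hnhds).mp h
  rwa [hcl.closure_eq] at this

lemma gauge_le_one_set_eq (hXv : Convex ℝ X) (hnhds : X ∈ 𝓝 (0 : E)) (hcl : IsClosed X) :
    {y : E | gauge X y ≤ 1} = X :=
  Set.Subset.antisymm (fun _ h => mem_of_gauge_le_one hXv hnhds hcl h)
    (fun _ h => gauge_le_one_of_mem h)

lemma gauge_le_norm_div {ρ' : ℝ} (hρ : 0 < ρ') (hsub : closedBall (0 : E) ρ' ⊆ X) (y : E) :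
    gauge X y ≤ ‖y‖ / ρ' := by
  have habs : Absorbent ℝ (closedBall (0 : E) ρ') :=
    absorbent_nhds_zero (closedBall_mem_nhds 0 hρ)
  have := gauge_mono habs hsub y
  rwa [gauge_closedBall hρ.le] at this

lemma norm_le_mul_gauge (habs : Absorbent ℝ X) {R : ℝ} (hR : 0 < R)
    (hXb : X ⊆ closedBall (0 : E) R) (y : E) : ‖y‖ ≤ R * gauge X y := by
  have := le_gauge_of_subset_closedBall habs hR.le hXb (x := y)
  rw [div_le_iff₀ hR] at this
  linarith [this]

lemma gauge_eq_zero_iff (h : IsProperCSet X) {y : E} : gauge X y = 0 ↔ y = 0 :=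
  gauge_eq_zero (pc_absorbent h) (NormedSpace.isVonNBounded_of_isBounded ℝ h.1.1.isBounded)

end Generic

/-! ### Specific lemmas -/
section Specific
variable (A : Matrix (Fin n) (Fin n) ℝ) (B : Matrix (Fin n) (Fin m) ℝ)
  {C : Set (Rsp2 n m)} {S : Set (Rsp n)}

lemma pair_fst (a : Rsp n) (b : Rsp m) : (WithLp.toLp 2 (a, b) : Rsp2 n m).ofLp.1 = a := rfl

lemma pair_smul (c : ℝ) (a : Rsp n) (b : Rsp m) :
    (c • (WithLp.toLp 2 (a, b) : Rsp2 n m)) = (WithLp.toLp 2 (c • a, c • b) : Rsp2 n m) := rfl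

lemma pair_eta (w : Rsp2 n m) : (WithLp.toLp 2 (w.ofLp.1, w.ofLp.2) : Rsp2 n m) = w := rfl

lemma Mfwd_add (w w' : Rsp2 n m) : Mfwd A B (w + w') = Mfwd A B w + Mfwd A B w' := by
  simp only [Mfwd]
  have h1 : (w + w').ofLp.1 = w.ofLp.1 + w'.ofLp.1 := rfl
  have h2 : (w + w').ofLp.2 = w.ofLp.2 + w'.ofLp.2 := rfl
  rw [h1, h2, map_add, map_add]
  abel

lemma Mfwd_smul (c : ℝ) (w : Rsp2 n m) : Mfwd A B (c • w) = c • Mfwd A B w := by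
  simp only [Mfwd]
  have h1 : (c • w).ofLp.1 = c • w.ofLp.1 := rfl
  have h2 : (c • w).ofLp.2 = c • w.ofLp.2 := rfl
  rw [h1, h2, _root_.map_smul, _root_.map_smul, smul_add]

lemma Mfwd_zero : Mfwd A B (0 : Rsp2 n m) = 0 := by
  simp only [Mfwd]
  have h1 : (0 : Rsp2 n m).ofLp.1 = 0 := rfl
  have h2 : (0 : Rsp2 n m).ofLp.2 = 0 := rfl
  rw [h1, h2, map_zero, map_zero, add_zero]

lemma Mtr_zero : Mtr A B (0 : Rsp n) = 0 := by
  simp only [Mtr, map_zero]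
  rfl

lemma inner_Mtr (w : Rsp2 n m) (p : Rsp n) : ⟪w, Mtr A B p⟫ = ⟪Mfwd A B w, p⟫ := by
  have h1 : ⟪w, Mtr A B p⟫ = ⟪w.ofLp.1, Matrix.toEuclideanLin Aᵀ p⟫ + ⟪w.ofLp.2, Matrix.toEuclideanLin Bᵀ p⟫ :=
    WithLp.prod_inner_apply w (Mtr A B p)
  have hA : Aᵀ = Aᴴ := (Matrix.conjTranspose_eq_transpose_of_trivial A).symm
  have hB : Bᵀ = Bᴴ := (Matrix.conjTranspose_eq_transpose_of_trivial B).symm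
  have h2 : ⟪w.ofLp.1, Matrix.toEuclideanLin Aᵀ p⟫ = ⟪Matrix.toEuclideanLin A w.ofLp.1, p⟫ := by
    rw [hA, real_inner_comm, Matrix.toEuclideanLin_conjTranspose_eq_adjoint,
      LinearMap.adjoint_inner_left, real_inner_comm]
  have h3 : ⟪w.ofLp.2, Matrix.toEuclideanLin Bᵀ p⟫ = ⟪Matrix.toEuclideanLin B w.ofLp.2, p⟫ := by
    rw [hB, real_inner_comm, Matrix.toEuclideanLin_conjTranspose_eq_adjoint,
      LinearMap.adjoint_inner_left, real_inner_comm]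
  rw [h1, h2, h3, Mfwd, ← inner_add_left]

lemma continuous_Mfwd : Continuous (Mfwd A B) := by
  have h1 : Continuous fun w : Rsp2 n m => w.ofLp.1 :=
    continuous_fst.comp (WithLp.prod_continuous_ofLp 2 (Rsp n) (Rsp m))
  have h2 : Continuous fun w : Rsp2 n m => w.ofLp.2 :=
    continuous_snd.comp (WithLp.prod_continuous_ofLp 2 (Rsp n) (Rsp m))
  exact ((Matrix.toEuclideanLin A).continuous_of_finiteDimensional.comp h1).add
    ((Matrix.toEuclideanLin B).continuous_of_finiteDimensional.comp h2)

lemma continuous_Pxproj : Continuous (Pxproj : Rsp2 n m → Rsp n) :=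
  continuous_fst.comp (WithLp.prod_continuous_ofLp 2 (Rsp n) (Rsp m))

lemma norm_fst_le' (w : Rsp2 n m) : ‖w.ofLp.1‖ ≤ ‖w‖ := by
  have h := WithLp.prod_norm_sq_eq_of_L2 w
  rw [← WithLp.ofLp_fst, ← WithLp.ofLp_snd] at h
  nlinarith [norm_nonneg w, norm_nonneg w.ofLp.1, norm_nonneg w.ofLp.2]

def pairz : Rsp n → Rsp2 n m := fun x => (WithLp.toLp 2 (x, 0) : Rsp2 n m)

lemma continuous_pairz : Continuous (pairz : Rsp n → Rsp2 n m) :=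
  (WithLp.prod_continuous_toLp 2 (Rsp n) (Rsp m)).comp
    (continuous_id.prodMk continuous_const)

lemma pair_add (a a' : Rsp n) (b b' : Rsp m) :
    ((WithLp.toLp 2 (a, b) : Rsp2 n m) + WithLp.toLp 2 (a', b')) = (WithLp.toLp 2 (a + a', b + b') : Rsp2 n m) := rfl

lemma pair_zero : (WithLp.toLp 2 ((0 : Rsp n), (0 : Rsp m)) : Rsp2 n m) = 0 := rfl

lemma polar_sum_eq (hC : IsProperCSet C) (hS : IsProperCSet S) :
    polarSet (polarSet C + Mtr A B '' polarSet S)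
      = {w : Rsp2 n m | gauge C w + gauge S (Mfwd A B w) ≤ 1} := by
  obtain ⟨RC, hRC, hCb⟩ := pc_bounded hC
  obtain ⟨RS, hRS, hSb⟩ := pc_bounded hS
  ext w
  constructor
  · intro hw
    have hkey : ∀ a ∈ polarSet C, ∀ p ∈ polarSet S, ⟪w, a⟫ + ⟪Mfwd A B w, p⟫ ≤ 1 := by
      intro a ha p hp
      have hmem : a + Mtr A B p ∈ polarSet C + Mtr A B '' polarSet S :=
        Set.add_mem_add ha (Set.mem_image_of_mem _ hp)
      have := hw _ hmem
      rwa [inner_add_right, inner_Mtr] at this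
    have hstep : ∀ a ∈ polarSet C, ⟪a, w⟫ ≤ 1 - gauge S (Mfwd A B w) := by
      intro a ha
      have h0 : ⟪w, a⟫ ≤ 1 := by
        have := hkey a ha 0 zero_mem_polarSet
        simpa [inner_zero_right] using this
      have hle : gauge S (Mfwd A B w) ≤ 1 - ⟪w, a⟫ := by
        apply gauge_le_of_forall_inner_le hRS (pc_closed hS) (pc_convex hS) (pc_zero_mem hS) hSb
          (by linarith)
        intro p hp
        have := hkey a ha p hp
        rw [real_inner_comm]
        linarith
      rw [real_inner_comm]; linarith
    have h1 : gauge C w ≤ 1 - gauge S (Mfwd A B w) := by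
      apply gauge_le_of_forall_inner_le hRC (pc_closed hC) (pc_convex hC) (pc_zero_mem hC) hCb
      · have := hstep 0 zero_mem_polarSet
        simpa [inner_zero_left] using this
      · exact hstep
    simp only [Set.mem_setOf_eq]; linarith
  · intro hw t ht
    obtain ⟨a, ha, q, hq, rfl⟩ := Set.mem_add.mp ht
    obtain ⟨p, hp, rfl⟩ := hq
    show (inner ℝ w (a + Mtr A B p) : ℝ) ≤ 1
    rw [inner_add_right, inner_Mtr]
    have h1 : ⟪w, a⟫ ≤ gauge C w := by
      rw [real_inner_comm]; exact inner_le_gauge (pc_absorbent hC) ha w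
    have h2 : ⟪Mfwd A B w, p⟫ ≤ gauge S (Mfwd A B w) := by
      rw [real_inner_comm]; exact inner_le_gauge (pc_absorbent hS) hp _
    simp only [Set.mem_setOf_eq] at hw
    linarith

lemma polar_zero_eq (hC : IsProperCSet C) :
    polarSet (polarSet C + Mtr A B '' ({0} : Set (Rsp n))) = {w : Rsp2 n m | gauge C w ≤ 1} := by
  rw [Set.image_singleton, Mtr_zero]
  have hadd : polarSet C + ({0} : Set (Rsp2 n m)) = polarSet C := by
    ext t
    constructor
    · rintro ⟨a, ha, q, hq, rfl⟩
      simp only [Set.mem_singleton_iff] at hq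
      simpa [hq] using ha
    · intro ht
      exact ⟨t, ht, 0, rfl, add_zero t⟩
  rw [hadd]
  obtain ⟨RC, hRC, hCb⟩ := pc_bounded hC
  ext w
  constructor
  · intro hw
    apply gauge_le_of_forall_inner_le hRC (pc_closed hC) (pc_convex hC) (pc_zero_mem hC) hCb
      zero_le_one
    intro a ha; rw [real_inner_comm]; exact hw a ha
  · intro hw a ha
    have h1 := inner_le_gauge (pc_absorbent hC) ha w
    simp only [Set.mem_setOf_eq] at hw
    show (inner ℝ w a : ℝ) ≤ 1
    rw [real_inner_comm]
    linarith

lemma Px_image_setOf (φ : Rsp2 n m → Prop) :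
    Pxproj '' {w | φ w} = {x | ∃ u : Rsp m, φ (WithLp.toLp 2 (x, u) : Rsp2 n m)} := by
  ext x
  constructor
  · rintro ⟨w, hw, rfl⟩
    exact ⟨w.ofLp.2, hw⟩
  · rintro ⟨u, hu⟩
    exact ⟨WithLp.toLp 2 (x, u), hu, rfl⟩

def Fset (A : Matrix (Fin n) (Fin n) ℝ) (B : Matrix (Fin n) (Fin m) ℝ)
    (C : Set (Rsp2 n m)) (S : Set (Rsp n)) : Set (Rsp n) :=
  {x | ∃ u : Rsp m, gauge C (WithLp.toLp 2 (x, u) : Rsp2 n m) + gauge S (Mfwd A B (WithLp.toLp 2 (x, u) : Rsp2 n m)) ≤ 1}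

lemma Fstep_eq (hC : IsProperCSet C) (hS : IsProperCSet S) :
    Pxproj '' polarSet (polarSet C + Mtr A B '' polarSet S) = Fset A B C S := by
  rw [polar_sum_eq A B hC hS, Px_image_setOf]
  rfl

lemma Fbase_eq (hC : IsProperCSet C) :
    Pxproj '' polarSet (polarSet C + Mtr A B '' ({0} : Set (Rsp n))) = Pxproj '' C := by
  rw [polar_zero_eq A B hC, gauge_le_one_set_eq (pc_convex hC) (pc_nhds hC) (pc_closed hC)]

lemma mem_PxC_iff {x : Rsp n} : x ∈ Pxproj '' C ↔ ∃ u : Rsp m, (WithLp.toLp 2 (x, u) : Rsp2 n m) ∈ C := by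
  have : C = {w : Rsp2 n m | w ∈ C} := rfl
  rw [this, Px_image_setOf]
  rfl

lemma proper_PxC (hC : IsProperCSet C) : IsProperCSet (Pxproj '' C) := by
  refine ⟨⟨?_, ?_, ?_⟩, ?_⟩
  · exact (pc_compact hC).image continuous_Pxproj
  · rintro x1 ⟨w1, hw1, rfl⟩ x2 ⟨w2, hw2, rfl⟩ a b ha hb hab
    exact ⟨a • w1 + b • w2, pc_convex hC hw1 hw2 ha hb hab, rfl⟩
  · exact ⟨0, pc_zero_mem hC, rfl⟩
  · have hpre : (pairz : Rsp n → Rsp2 n m) ⁻¹' C ∈ 𝓝 (0 : Rsp n) := by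
      refine ContinuousAt.preimage_mem_nhds continuous_pairz.continuousAt ?_
      exact pc_nhds hC
    rw [mem_interior_iff_mem_nhds]
    exact Filter.mem_of_superset hpre fun x hx => ⟨pairz x, hx, rfl⟩

lemma proper_Fset (hC : IsProperCSet C) (hS : IsProperCSet S) :
    IsProperCSet (Fset A B C S) ∧ Fset A B C S ⊆ Pxproj '' C := by
  haveI : ContinuousSMul ℝ (Rsp2 n m) := IsBoundedSMul.continuousSMul
  set K := {w : Rsp2 n m | gauge C w + gauge S (Mfwd A B w) ≤ 1} with hK
  have hKsub : K ⊆ C := by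
    intro w hw
    simp only [hK, Set.mem_setOf_eq] at hw
    have := gauge_nonneg (s := S) (Mfwd A B w)
    exact mem_of_gauge_le_one (pc_convex hC) (pc_nhds hC) (pc_closed hC) (by linarith)
  have hKclosed : IsClosed K :=
    isClosed_le ((continuous_gauge (pc_convex hC) (pc_nhds hC)).add
      ((continuous_gauge (pc_convex hS) (pc_nhds hS)).comp (continuous_Mfwd A B)))
      continuous_const
  have hKcomp : IsCompact K := (pc_compact hC).of_isClosed_subset hKclosed hKsub
  have hFeq : Fset A B C S = Pxproj '' K := by
    rw [hK]
    exact (Px_image_setOf (fun w : Rsp2 n m => gauge C w + gauge S (Mfwd A B w) ≤ 1)).symm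
  refine ⟨⟨⟨?_, ?_, ?_⟩, ?_⟩, ?_⟩
  · rw [hFeq]; exact hKcomp.image continuous_Pxproj
  · intro x1 hx1 x2 hx2 a b ha hb hab
    obtain ⟨u1, h1⟩ := hx1
    obtain ⟨u2, h2⟩ := hx2
    refine ⟨a • u1 + b • u2, ?_⟩
    have hpair : (WithLp.toLp 2 (a • x1 + b • x2, a • u1 + b • u2) : Rsp2 n m)
        = a • (WithLp.toLp 2 (x1, u1) : Rsp2 n m) + b • (WithLp.toLp 2 (x2, u2) : Rsp2 n m) := rfl
    rw [hpair]
    have g1 : gauge C (a • (WithLp.toLp 2 (x1, u1) : Rsp2 n m) + b • (WithLp.toLp 2 (x2, u2) : Rsp2 n m))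
        ≤ a * gauge C (WithLp.toLp 2 (x1, u1) : Rsp2 n m) + b * gauge C (WithLp.toLp 2 (x2, u2) : Rsp2 n m) := by
      calc gauge C _ ≤ gauge C (a • (WithLp.toLp 2 (x1, u1) : Rsp2 n m)) + gauge C (b • (WithLp.toLp 2 (x2, u2) : Rsp2 n m)) :=
            gauge_add_le (pc_convex hC) (pc_absorbent hC) _ _
        _ = a * gauge C (WithLp.toLp 2 (x1, u1) : Rsp2 n m) + b * gauge C (WithLp.toLp 2 (x2, u2) : Rsp2 n m) := by
            rw [gauge_smul_of_nonneg ha, gauge_smul_of_nonneg hb, smul_eq_mul, smul_eq_mul]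
    have hM : Mfwd A B (a • (WithLp.toLp 2 (x1, u1) : Rsp2 n m) + b • (WithLp.toLp 2 (x2, u2) : Rsp2 n m))
        = a • Mfwd A B (WithLp.toLp 2 (x1, u1) : Rsp2 n m) + b • Mfwd A B (WithLp.toLp 2 (x2, u2) : Rsp2 n m) := by
      rw [Mfwd_add, Mfwd_smul, Mfwd_smul]
    have g2 : gauge S (Mfwd A B (a • (WithLp.toLp 2 (x1, u1) : Rsp2 n m) + b • (WithLp.toLp 2 (x2, u2) : Rsp2 n m)))
        ≤ a * gauge S (Mfwd A B (WithLp.toLp 2 (x1, u1) : Rsp2 n m)) + b * gauge S (Mfwd A B (WithLp.toLp 2 (x2, u2) : Rsp2 n m)) := by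
      rw [hM]
      calc gauge S _ ≤ gauge S (a • Mfwd A B (WithLp.toLp 2 (x1, u1) : Rsp2 n m))
            + gauge S (b • Mfwd A B (WithLp.toLp 2 (x2, u2) : Rsp2 n m)) :=
            gauge_add_le (pc_convex hS) (pc_absorbent hS) _ _
        _ = _ := by
            rw [gauge_smul_of_nonneg ha, gauge_smul_of_nonneg hb, smul_eq_mul, smul_eq_mul]
    nlinarith [gauge_nonneg (s := C) (WithLp.toLp 2 (x1, u1) : Rsp2 n m), gauge_nonneg (s := C) (WithLp.toLp 2 (x2, u2) : Rsp2 n m)]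
  · exact ⟨0, by rw [pair_zero, Mfwd_zero, gauge_zero, gauge_zero]; norm_num⟩
  · set ψ := fun x : Rsp n => gauge C (pairz x)
      + gauge S (Mfwd A B (pairz x)) with hψ
    have hψc : Continuous ψ :=
      ((continuous_gauge (pc_convex hC) (pc_nhds hC)).comp continuous_pairz).add
        ((continuous_gauge (pc_convex hS) (pc_nhds hS)).comp
          ((continuous_Mfwd A B).comp continuous_pairz))
    have hψ0 : ψ 0 = 0 := by
      have hz : (pairz 0 : Rsp2 n m) = 0 := rfl
      simp only [hψ, hz, Mfwd_zero, gauge_zero, add_zero]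
    have hopen : IsOpen (ψ ⁻¹' Set.Iio 1) := isOpen_Iio.preimage hψc
    rw [mem_interior_iff_mem_nhds]
    apply Filter.mem_of_superset (hopen.mem_nhds (by simp [Set.mem_preimage, hψ0]))
    intro x hx
    exact ⟨0, le_of_lt hx⟩
  · rw [hFeq]
    rintro x ⟨w, hw, rfl⟩
    exact ⟨w, hKsub hw, rfl⟩

end Specific

/-! ### Trajectories and certificates -/
section Traj
variable (A : Matrix (Fin n) (Fin n) ℝ) (B : Matrix (Fin n) (Fin m) ℝ)
  (C : Set (Rsp2 n m)) (L : Set (Rsp n))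

def traj (x : Rsp n) (u : ℕ → Rsp m) : ℕ → Rsp n
  | 0 => x
  | i + 1 => Mfwd A B (WithLp.toLp 2 (traj x u i, u i) : Rsp2 n m)

@[simp] lemma traj_zero (x : Rsp n) (u : ℕ → Rsp m) : traj A B x u 0 = x := rfl

@[simp] lemma traj_succ (x : Rsp n) (u : ℕ → Rsp m) (i : ℕ) :
    traj A B x u (i + 1) = Mfwd A B (WithLp.toLp 2 (traj A B x u i, u i) : Rsp2 n m) := rfl

def loSum (x : Rsp n) (u : ℕ → Rsp m) (k : ℕ) : ℝ :=
  ∑ i ∈ Finset.range (k + 1), gauge C (WithLp.toLp 2 (traj A B x u i, u i) : Rsp2 n m)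

lemma loSum_zero (x : Rsp n) (u : ℕ → Rsp m) :
    loSum A B C x u 0 = gauge C (WithLp.toLp 2 (x, u 0) : Rsp2 n m) := by
  simp [loSum]

lemma loSum_nonneg (x : Rsp n) (u : ℕ → Rsp m) (k : ℕ) : 0 ≤ loSum A B C x u k :=
  Finset.sum_nonneg fun _ _ => gauge_nonneg _

lemma traj_shift (x : Rsp n) (u : ℕ → Rsp m) (i : ℕ) :
    traj A B (Mfwd A B (WithLp.toLp 2 (x, u 0) : Rsp2 n m)) (fun j => u (j + 1)) i = traj A B x u (i + 1) := by
  induction i with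
  | zero => rfl
  | succ i ih => rw [traj_succ, traj_succ, ih]

lemma traj_smul (c : ℝ) (x : Rsp n) (u : ℕ → Rsp m) (i : ℕ) :
    traj A B (c • x) (fun j => c • u j) i = c • traj A B x u i := by
  induction i with
  | zero => rfl
  | succ i ih =>
    rw [traj_succ, traj_succ, ih]
    rw [show (WithLp.toLp 2 (c • traj A B x u i, c • u i) : Rsp2 n m)
        = c • (WithLp.toLp 2 (traj A B x u i, u i) : Rsp2 n m) from rfl, Mfwd_smul]

lemma loSum_succ (x : Rsp n) (u : ℕ → Rsp m) (k : ℕ) :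
    loSum A B C x u (k + 1) = gauge C (WithLp.toLp 2 (x, u 0) : Rsp2 n m)
      + loSum A B C (Mfwd A B (WithLp.toLp 2 (x, u 0) : Rsp2 n m)) (fun j => u (j + 1)) k := by
  rw [loSum, Finset.sum_range_succ' (fun i => gauge C (WithLp.toLp 2 (traj A B x u i, u i) : Rsp2 n m)) (k + 1)]
  rw [loSum, add_comm]
  congr 1
  apply Finset.sum_congr rfl
  intro i _
  rw [traj_shift]

lemma loSum_smul (c : ℝ) (hc : 0 ≤ c) (x : Rsp n) (u : ℕ → Rsp m) (k : ℕ) :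
    loSum A B C (c • x) (fun j => c • u j) k = c * loSum A B C x u k := by
  rw [loSum, loSum, Finset.mul_sum]
  apply Finset.sum_congr rfl
  intro i _
  rw [traj_smul]
  rw [show (WithLp.toLp 2 (c • traj A B x u i, c • u i) : Rsp2 n m)
      = c • (WithLp.toLp 2 (traj A B x u i, u i) : Rsp2 n m) from rfl]
  rw [gauge_smul_of_nonneg hc, smul_eq_mul]

def UpCert (k : ℕ) (x : Rsp n) (b : ℝ) : Prop :=
  ∃ u : ℕ → Rsp m, loSum A B C x u k + gauge L (traj A B x u (k + 1)) ≤ b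

lemma upcert_mono {k x b b'} (h : UpCert A B C L k x b) (hb : b ≤ b') : UpCert A B C L k x b' := by
  obtain ⟨u, hu⟩ := h
  exact ⟨u, hu.trans hb⟩

def ucons (u0 : Rsp m) (u : ℕ → Rsp m) : ℕ → Rsp m := fun i => Nat.casesOn i u0 u

@[simp] lemma ucons_zero (u0 : Rsp m) (u : ℕ → Rsp m) : ucons u0 u 0 = u0 := rfl
@[simp] lemma ucons_succ (u0 : Rsp m) (u : ℕ → Rsp m) (i : ℕ) : ucons u0 u (i + 1) = u i := rfl

lemma upcert_prepend {k : ℕ} {x : Rsp n} {b : ℝ} (u0 : Rsp m)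
    (h : UpCert A B C L k (Mfwd A B (WithLp.toLp 2 (x, u0) : Rsp2 n m)) b) :
    UpCert A B C L (k + 1) x (gauge C (WithLp.toLp 2 (x, u0) : Rsp2 n m) + b) := by
  obtain ⟨u, hu⟩ := h
  refine ⟨ucons u0 u, ?_⟩
  have h0 : (ucons u0 u 0) = u0 := rfl
  have hfun : (fun j => ucons u0 u (j + 1)) = u := by funext j; rfl
  rw [loSum_succ, h0, hfun, add_assoc]
  have htr : traj A B x (ucons u0 u) (k + 1 + 1)
      = traj A B (Mfwd A B (WithLp.toLp 2 (x, u0) : Rsp2 n m)) u (k + 1) := by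
    rw [← traj_shift A B x (ucons u0 u) (k + 1), h0, hfun]
  rw [htr]
  linarith

lemma upcert_smul {k : ℕ} {x : Rsp n} {b : ℝ} {c : ℝ} (hc : 0 < c)
    (h : UpCert A B C L k x b) : UpCert A B C L k (c • x) (c * b) := by
  obtain ⟨u, hu⟩ := h
  refine ⟨fun j => c • u j, ?_⟩
  rw [loSum_smul A B C c hc.le, traj_smul, gauge_smul_of_nonneg hc.le, smul_eq_mul, ← mul_add]
  exact mul_le_mul_of_nonneg_left hu hc.le

lemma lyap_cert
    (hLy : ∀ x : Rsp n, ∃ u : Rsp m,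
      gauge L (Mfwd A B (WithLp.toLp 2 (x, u) : Rsp2 n m)) + gauge C (WithLp.toLp 2 (x, u) : Rsp2 n m) ≤ gauge L x) :
    ∀ (j : ℕ) (z : Rsp n), UpCert A B C L j z (gauge L z) := by
  intro j
  induction j with
  | zero =>
    intro z
    obtain ⟨u0, hu0⟩ := hLy z
    refine ⟨fun _ => u0, ?_⟩
    rw [loSum_zero]
    have : traj A B z (fun _ => u0) 1 = Mfwd A B (WithLp.toLp 2 (z, u0) : Rsp2 n m) := rfl
    rw [this]
    linarith
  | succ j ih =>
    intro z
    obtain ⟨u0, hu0⟩ := hLy z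
    have h1 := upcert_prepend A B C L u0 (ih (Mfwd A B (WithLp.toLp 2 (z, u0) : Rsp2 n m)))
    exact upcert_mono A B C L h1 (by linarith)

lemma upcert_splice {b : ℝ} :
    ∀ (i k : ℕ) (x : Rsp n) (u : ℕ → Rsp m), i ≤ k →
      UpCert A B C L (k - i) (traj A B x u i) b →
      UpCert A B C L k x
        ((∑ l ∈ Finset.range i, gauge C (WithLp.toLp 2 (traj A B x u l, u l) : Rsp2 n m)) + b) := by
  intro i
  induction i with
  | zero =>
    intro k x u _ h
    simpa using h
  | succ i ih =>
    intro k x u hik h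
    rcases k with _ | k'
    · omega
    have hik' : i ≤ k' := by omega
    have hsub : k' + 1 - (i + 1) = k' - i := by omega
    rw [hsub] at h
    have htr : traj A B x u (i + 1)
        = traj A B (Mfwd A B (WithLp.toLp 2 (x, u 0) : Rsp2 n m)) (fun j => u (j + 1)) i :=
      (traj_shift A B x u i).symm
    rw [htr] at h
    have h2 := ih k' (Mfwd A B (WithLp.toLp 2 (x, u 0) : Rsp2 n m)) (fun j => u (j + 1)) hik' h
    have h3 := upcert_prepend A B C L (u 0) h2
    apply upcert_mono A B C L h3
    rw [Finset.sum_range_succ' (fun l => gauge C (WithLp.toLp 2 (traj A B x u l, u l) : Rsp2 n m)) i]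
    have hterm : ∀ l, gauge C (WithLp.toLp 2 (traj A B (Mfwd A B (WithLp.toLp 2 (x, u 0) : Rsp2 n m)) (fun j => u (j + 1)) l,
        u (l + 1)) : Rsp2 n m) = gauge C (WithLp.toLp 2 (traj A B x u (l + 1), u (l + 1)) : Rsp2 n m) := by
      intro l; rw [traj_shift]
    have hsum : (∑ l ∈ Finset.range i,
        gauge C (WithLp.toLp 2 (traj A B (Mfwd A B (WithLp.toLp 2 (x, u 0) : Rsp2 n m)) (fun j => u (j + 1)) l,
          u (l + 1)) : Rsp2 n m))
        = ∑ l ∈ Finset.range i, gauge C (WithLp.toLp 2 (traj A B x u (l + 1), u (l + 1)) : Rsp2 n m) :=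
      Finset.sum_congr rfl fun l _ => hterm l
    rw [hsum]
    simp only [traj_zero]
    linarith

end Traj
/-- the limits of the lower iterates (initial polar {0}) and of the
upper iterates (initial polar ℒ*) coincide. -/
theorem stmt_17 (n m : ℕ) (A : Matrix (Fin n) (Fin n) ℝ) (B : Matrix (Fin n) (Fin m) ℝ)
    (hstab : ∃ K : Matrix (Fin m) (Fin n) ℝ,
      Tendsto (fun k : ℕ => (A + B * K) ^ k) atTop (nhds 0))
    (C : Set (Rsp2 n m)) (hC : IsProperCSet C)
    (L : Set (Rsp n)) (hL : IsProperCSet L)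
    (hLyap : ∀ x : Rsp n, ∃ u : Rsp m,
      mgauge L (Mfwd A B (WithLp.toLp 2 (x, u))) + mgauge C (WithLp.toLp 2 (x, u) : Rsp2 n m) ≤ mgauge L x)
    (Plo Pup : ℕ → Set (Rsp n))
    (hPlo0 : Plo 0 = Pxproj '' polarSet (polarSet C + Mtr A B '' ({0} : Set (Rsp n))))
    (hPlos : ∀ k : ℕ,
      Plo (k + 1) = Pxproj '' polarSet (polarSet C + Mtr A B '' polarSet (Plo k)))
    (hPup0 : Pup 0 = Pxproj '' polarSet (polarSet C + Mtr A B '' polarSet L))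
    (hPups : ∀ k : ℕ,
      Pup (k + 1) = Pxproj '' polarSet (polarSet C + Mtr A B '' polarSet (Pup k)))
    (PloInf PupInf : Set (Rsp n))
    (hloP : IsProperCSet PloInf) (hupP : IsProperCSet PupInf)
    (hloConv : Tendsto (fun k : ℕ => Metric.hausdorffDist (Plo k) PloInf) atTop (nhds 0))
    (hupConv : Tendsto (fun k : ℕ => Metric.hausdorffDist (Pup k) PupInf) atTop (nhds 0)) :
    PloInf = PupInf := by
  classical
  -- Lyapunov condition in terms of `gauge`
  have hLy : ∀ x : Rsp n, ∃ u : Rsp m,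
      gauge L (Mfwd A B (WithLp.toLp 2 (x, u) : Rsp2 n m)) + gauge C (WithLp.toLp 2 (x, u) : Rsp2 n m) ≤ gauge L x := by
    intro x
    obtain ⟨u, hu⟩ := hLyap x
    rw [mgauge_eq_gauge (pc_nonempty hL), mgauge_eq_gauge (pc_nonempty hC)] at hu
    exact ⟨u, hu⟩
  -- properness of iterates and primal recursions
  have hPup' : ∀ k, IsProperCSet (Pup k) ∧ Pup k ⊆ Pxproj '' C := by
    intro k
    induction k with
    | zero => rw [hPup0, Fstep_eq A B hC hL]; exact proper_Fset A B hC hL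
    | succ k ih => rw [hPups k, Fstep_eq A B hC ih.1]; exact proper_Fset A B hC ih.1
  have hPupP : ∀ k, IsProperCSet (Pup k) := fun k => (hPup' k).1
  have hPupEq : ∀ k, Pup (k + 1) = Fset A B C (Pup k) := fun k => by
    rw [hPups k, Fstep_eq A B hC (hPupP k)]
  have hPup0' : Pup 0 = Fset A B C L := by rw [hPup0, Fstep_eq A B hC hL]
  have hPlo0' : Plo 0 = Pxproj '' C := by rw [hPlo0, Fbase_eq A B hC]
  have hPlo' : ∀ k, IsProperCSet (Plo k) ∧ Plo k ⊆ Pxproj '' C := by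
    intro k
    induction k with
    | zero => rw [hPlo0']; exact ⟨proper_PxC hC, Set.Subset.refl _⟩
    | succ k ih => rw [hPlos k, Fstep_eq A B hC ih.1]; exact proper_Fset A B hC ih.1
  have hPloP : ∀ k, IsProperCSet (Plo k) := fun k => (hPlo' k).1
  have hPloEq : ∀ k, Plo (k + 1) = Fset A B C (Plo k) := fun k => by
    rw [hPlos k, Fstep_eq A B hC (hPloP k)]
  -- upper iterates are contained in the lower iterates
  have hsub : ∀ k, Pup k ⊆ Plo k := by
    intro k
    induction k with
    | zero => rw [hPup0', hPlo0']; exact (proper_Fset A B hC hL).2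
    | succ k ih =>
      rw [hPupEq k, hPloEq k]
      rintro x ⟨u, hu⟩
      refine ⟨u, ?_⟩
      have hg := gauge_mono (pc_absorbent (hPupP k)) ih (Mfwd A B (WithLp.toLp 2 (x, u) : Rsp2 n m))
      linarith
  -- certificates give membership in the upper iterates
  have certB : ∀ k (x : Rsp n), UpCert A B C L k x 1 → x ∈ Pup k := by
    intro k
    induction k with
    | zero =>
      rintro x ⟨u, hu⟩
      rw [loSum_zero] at hu
      rw [hPup0']
      refine ⟨u 0, ?_⟩
      have h1 : traj A B x u 1 = Mfwd A B (WithLp.toLp 2 (x, u 0) : Rsp2 n m) := rfl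
      rw [h1] at hu
      linarith
    | succ k ih =>
      rintro x ⟨u, hu⟩
      rw [loSum_succ A B C] at hu
      rw [show traj A B x u (k + 1 + 1)
          = traj A B (Mfwd A B (WithLp.toLp 2 (x, u 0) : Rsp2 n m)) (fun j => u (j + 1)) (k + 1) from
        (traj_shift A B x u (k + 1)).symm] at hu
      rw [add_assoc] at hu
      set t := loSum A B C (Mfwd A B (WithLp.toLp 2 (x, u 0) : Rsp2 n m)) (fun j => u (j + 1)) k
        + gauge L (traj A B (Mfwd A B (WithLp.toLp 2 (x, u 0) : Rsp2 n m)) (fun j => u (j + 1)) (k + 1))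
        with ht
      have hlo0 := loSum_nonneg A B C (Mfwd A B (WithLp.toLp 2 (x, u 0) : Rsp2 n m)) (fun j => u (j + 1)) k
      have hgL0 := gauge_nonneg (s := L)
        (traj A B (Mfwd A B (WithLp.toLp 2 (x, u 0) : Rsp2 n m)) (fun j => u (j + 1)) (k + 1))
      have ht0 : 0 ≤ t := by rw [ht]; linarith
      rcases ht0.eq_or_lt with heq | hpos
      · -- degenerate case : the tail cost is zero, so the successor state is zero
        have hlz : loSum A B C (Mfwd A B (WithLp.toLp 2 (x, u 0) : Rsp2 n m)) (fun j => u (j + 1)) k = 0 := by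
          rw [ht] at heq; linarith
        have hfirst : gauge C (WithLp.toLp 2 (Mfwd A B (WithLp.toLp 2 (x, u 0) : Rsp2 n m), u 1) : Rsp2 n m) = 0 := by
          have hle := Finset.single_le_sum
            (f := fun i => gauge C
              (WithLp.toLp 2 (traj A B (Mfwd A B (WithLp.toLp 2 (x, u 0) : Rsp2 n m)) (fun j => u (j + 1)) i,
                u (i + 1)) : Rsp2 n m))
            (fun i _ => gauge_nonneg _) (Finset.mem_range.2 (Nat.succ_pos k))
          have hle' : gauge C (WithLp.toLp 2 (Mfwd A B (WithLp.toLp 2 (x, u 0) : Rsp2 n m), u 1) : Rsp2 n m)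
              ≤ loSum A B C (Mfwd A B (WithLp.toLp 2 (x, u 0) : Rsp2 n m)) (fun j => u (j + 1)) k := hle
          have := gauge_nonneg (s := C) (WithLp.toLp 2 (Mfwd A B (WithLp.toLp 2 (x, u 0) : Rsp2 n m), u 1) : Rsp2 n m)
          linarith
        have hz0 : (WithLp.toLp 2 (Mfwd A B (WithLp.toLp 2 (x, u 0) : Rsp2 n m), u 1) : Rsp2 n m) = 0 :=
          (gauge_eq_zero_iff hC).mp hfirst
        have hz0' : Mfwd A B (WithLp.toLp 2 (x, u 0) : Rsp2 n m) = 0 := congrArg (fun w : Rsp2 n m => w.ofLp.1) hz0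
        rw [hPupEq k]
        refine ⟨u 0, ?_⟩
        rw [hz0', gauge_zero]
        linarith
      · have hc1 : UpCert A B C L k (Mfwd A B (WithLp.toLp 2 (x, u 0) : Rsp2 n m)) t :=
          ⟨fun j => u (j + 1), le_of_eq ht.symm⟩
        have hc2 := upcert_smul A B C L (inv_pos.2 hpos) hc1
        rw [inv_mul_cancel₀ hpos.ne'] at hc2
        have hy := ih _ hc2
        have hg1 : gauge (Pup k) (t⁻¹ • Mfwd A B (WithLp.toLp 2 (x, u 0) : Rsp2 n m)) ≤ 1 :=
          gauge_le_one_of_mem hy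
        have hg2 : gauge (Pup k) (Mfwd A B (WithLp.toLp 2 (x, u 0) : Rsp2 n m)) ≤ t := by
          have h2 := gauge_smul_of_nonneg (a := t) hpos.le
            (t⁻¹ • Mfwd A B (WithLp.toLp 2 (x, u 0) : Rsp2 n m)) (s := Pup k)
          rw [smul_smul, mul_inv_cancel₀ hpos.ne', one_smul, smul_eq_mul] at h2
          rw [h2]
          nlinarith
        rw [hPupEq k]
        exact ⟨u 0, by linarith⟩
  -- membership in the lower iterates gives approximate certificates
  have certA : ∀ k (x : Rsp n), x ∈ Plo k → ∀ δ : ℝ, 0 < δ → δ ≤ 1 →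
      ∃ u : ℕ → Rsp m, loSum A B C x u k ≤ 1 + δ := by
    intro k
    induction k with
    | zero =>
      intro x hx δ hδ _
      rw [hPlo0', mem_PxC_iff] at hx
      obtain ⟨u0, hu0⟩ := hx
      refine ⟨fun _ => u0, ?_⟩
      rw [loSum_zero]
      have := gauge_le_one_of_mem hu0
      linarith
    | succ k ih =>
      intro x hx δ hδ hδ1
      rw [hPloEq k] at hx
      obtain ⟨u0, hu0⟩ := hx
      have ht0 : 0 ≤ gauge (Plo k) (Mfwd A B (WithLp.toLp 2 (x, u0) : Rsp2 n m)) := gauge_nonneg _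
      have hgC0 : 0 ≤ gauge C (WithLp.toLp 2 (x, u0) : Rsp2 n m) := gauge_nonneg _
      have ht1 : gauge (Plo k) (Mfwd A B (WithLp.toLp 2 (x, u0) : Rsp2 n m)) ≤ 1 := by linarith
      set s := gauge (Plo k) (Mfwd A B (WithLp.toLp 2 (x, u0) : Rsp2 n m)) + δ / 3 with hsdef
      clear_value s
      have hspos : 0 < s := by rw [hsdef]; linarith
      have hzmem : Mfwd A B (WithLp.toLp 2 (x, u0) : Rsp2 n m) ∈ s • Plo k :=
        mem_smul_set_of_gauge_lt (pc_convex (hPloP k)) (pc_zero_mem (hPloP k))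
          (pc_absorbent (hPloP k)) (by rw [hsdef]; linarith)
      obtain ⟨y, hy, hzy⟩ := Set.mem_smul_set.mp hzmem
      obtain ⟨u', hu'⟩ := ih y hy (δ / 3) (by linarith) (by linarith)
      refine ⟨ucons u0 (fun j => s • u' j), ?_⟩
      rw [loSum_succ]
      have h0 : ucons u0 (fun j => s • u' j) 0 = u0 := rfl
      have hfun : (fun j => ucons u0 (fun j => s • u' j) (j + 1))
          = fun j => s • u' j := rfl
      rw [h0, hfun, ← hzy, loSum_smul A B C s hspos.le]
      have hprod := mul_le_mul_of_nonneg_left hu' hspos.le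
      have hq1 : gauge (Plo k) (Mfwd A B (WithLp.toLp 2 (x, u0) : Rsp2 n m)) * δ ≤ 1 * δ :=
        mul_le_mul_of_nonneg_right ht1 hδ.le
      have hq2 : δ * δ ≤ 1 * δ := mul_le_mul_of_nonneg_right hδ1 hδ.le
      have hexp : s * (1 + δ / 3) = gauge (Plo k) (Mfwd A B (WithLp.toLp 2 (x, u0) : Rsp2 n m))
          + (gauge (Plo k) (Mfwd A B (WithLp.toLp 2 (x, u0) : Rsp2 n m)) * δ) / 3 + δ / 3 + (δ * δ) / 9 := by
        rw [hsdef]; ring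
      linarith [hprod, hexp, hu0, hq1, hq2, hδ]
  -- constants
  obtain ⟨R, hR, hCb⟩ := pc_bounded hC
  obtain ⟨ρ, hρ, hLb⟩ := pc_inner_ball hL
  -- key quantitative lemma
  have key : ∀ ε : ℝ, 0 < ε → ∃ K : ℕ, ∀ k, K ≤ k → ∀ x ∈ Plo k,
      ∃ y ∈ Pup k, x = (1 + ε) • y := by
    intro ε hε
    have hδpos : 0 < min ε 1 / 2 := by
      have := lt_min hε one_pos
      linarith
    have hδ1 : min ε 1 / 2 ≤ 1 := by
      have := min_le_right ε 1
      linarith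
    have hδε : min ε 1 / 2 ≤ ε / 2 := by
      have := min_le_left ε 1
      linarith
    refine ⟨⌈4 * R / (ρ * ε)⌉₊, ?_⟩
    intro k hk x hx
    obtain ⟨u, hu⟩ := certA k x hx (min ε 1 / 2) hδpos hδ1
    have hkpos : (0:ℝ) < (k : ℝ) + 1 := by positivity
    -- pigeonhole: some stage has small cost
    have hpig : ∃ i ∈ Finset.range (k + 1),
        gauge C (WithLp.toLp 2 (traj A B x u i, u i) : Rsp2 n m) ≤ (1 + min ε 1 / 2) / ((k : ℝ) + 1) := by
      apply Finset.exists_le_of_sum_le Finset.nonempty_range_add_one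
      rw [Finset.sum_const, Finset.card_range, nsmul_eq_mul]
      have hsum : (∑ i ∈ Finset.range (k + 1),
          gauge C (WithLp.toLp 2 (traj A B x u i, u i) : Rsp2 n m)) ≤ 1 + min ε 1 / 2 := hu
      have hcast : ((k : ℝ) + 1) * ((1 + min ε 1 / 2) / ((k : ℝ) + 1)) = 1 + min ε 1 / 2 := by
        field_simp
      push_cast
      rw [hcast]
      exact hsum
    obtain ⟨i, hi, hgi⟩ := hpig
    have hik : i ≤ k := by
      have := Finset.mem_range.1 hi
      omega
    -- the state at stage i is small
    have hnz : ‖traj A B x u i‖ ≤ R * ((1 + min ε 1 / 2) / ((k : ℝ) + 1)) := by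
      have h1 := norm_fst_le' (WithLp.toLp 2 (traj A B x u i, u i) : Rsp2 n m)
      have h2 := norm_le_mul_gauge (pc_absorbent hC) hR hCb
        (WithLp.toLp 2 (traj A B x u i, u i) : Rsp2 n m)
      have h3 := mul_le_mul_of_nonneg_left hgi hR.le
      exact (h1.trans h2).trans h3
    have hgL : gauge L (traj A B x u i) ≤ ε / 2 := by
      have h1 := gauge_le_norm_div hρ hLb (traj A B x u i)
      have h2 : ‖traj A B x u i‖ / ρ ≤ R * ((1 + min ε 1 / 2) / ((k : ℝ) + 1)) / ρ :=
        (div_le_div_iff_of_pos_right hρ).2 hnz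
      have hk1 : 4 * R / (ρ * ε) ≤ (k : ℝ) + 1 := by
        have h4 := Nat.le_ceil (4 * R / (ρ * ε))
        have h5 : (⌈4 * R / (ρ * ε)⌉₊ : ℝ) ≤ (k : ℝ) := Nat.cast_le.2 hk
        linarith
      have h6 : 4 * R ≤ ((k : ℝ) + 1) * (ρ * ε) := by
        have h7 := mul_le_mul_of_nonneg_right hk1 (le_of_lt (by positivity : (0:ℝ) < ρ * ε))
        rwa [div_mul_cancel₀ _ (by positivity : (ρ * ε) ≠ 0)] at h7
      have hD : R * ((1 + min ε 1 / 2) / ((k : ℝ) + 1)) / ρ ≤ ε / 2 := by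
        rw [div_le_div_iff₀ hρ two_pos]
        have he : R * ((1 + min ε 1 / 2) / ((k : ℝ) + 1)) * 2
            = 2 * R * (1 + min ε 1 / 2) / ((k : ℝ) + 1) := by ring
        rw [he, div_le_iff₀ hkpos]
        have h8 : 0 ≤ R * (1 - min ε 1 / 2) := mul_nonneg hR.le (by linarith)
        have h9 : ε * ρ * ((k : ℝ) + 1) = ((k : ℝ) + 1) * (ρ * ε) := by ring
        linarith
      linarith
    -- splice the Lyapunov certificate
    have hcert := upcert_splice A B C L i k x u hik
      (lyap_cert A B C L hLy (k - i) (traj A B x u i))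
    have hsum_le : (∑ l ∈ Finset.range i, gauge C (WithLp.toLp 2 (traj A B x u l, u l) : Rsp2 n m))
        ≤ 1 + min ε 1 / 2 := by
      have hmono : (∑ l ∈ Finset.range i, gauge C (WithLp.toLp 2 (traj A B x u l, u l) : Rsp2 n m))
          ≤ ∑ l ∈ Finset.range (k + 1), gauge C (WithLp.toLp 2 (traj A B x u l, u l) : Rsp2 n m) :=
        Finset.sum_le_sum_of_subset_of_nonneg (Finset.range_subset_range.2 (by omega))
          (fun _ _ _ => gauge_nonneg _)
      exact hmono.trans hu
    have hctot : UpCert A B C L k x (1 + ε) := by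
      apply upcert_mono A B C L hcert
      linarith
    have h1ε : (0:ℝ) < 1 + ε := by linarith
    have hc2 := upcert_smul A B C L (inv_pos.2 h1ε) hctot
    rw [inv_mul_cancel₀ h1ε.ne'] at hc2
    have hy := certB k _ hc2
    refine ⟨(1 + ε)⁻¹ • x, hy, ?_⟩
    rw [smul_smul, mul_inv_cancel₀ h1ε.ne', one_smul]
  -- pass to the limits
  obtain ⟨RD, hRD, hDb⟩ := pc_bounded (proper_PxC (C := C) hC)
  have hconv1 : ∀ η' : ℝ, 0 < η' → ∃ N, ∀ k ≥ N, Metric.hausdorffDist (Plo k) PloInf < η' := by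
    intro η' hη'
    obtain ⟨N, hN⟩ := Metric.tendsto_atTop.mp hloConv η' hη'
    refine ⟨N, fun k hk => ?_⟩
    have := hN k hk
    rw [Real.dist_eq, sub_zero] at this
    exact (le_abs_self _).trans_lt this
  have hconv2 : ∀ η' : ℝ, 0 < η' → ∃ N, ∀ k ≥ N, Metric.hausdorffDist (Pup k) PupInf < η' := by
    intro η' hη'
    obtain ⟨N, hN⟩ := Metric.tendsto_atTop.mp hupConv η' hη'
    refine ⟨N, fun k hk => ?_⟩
    have := hN k hk
    rw [Real.dist_eq, sub_zero] at this
    exact (le_abs_self _).trans_lt this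
  have hfinlo : ∀ k, EMetric.hausdorffEdist (Plo k) PloInf ≠ ⊤ := fun k =>
    Metric.hausdorffEdist_ne_top_of_nonempty_of_bounded (pc_nonempty (hPloP k))
      (pc_nonempty hloP) (pc_compact (hPloP k)).isBounded (pc_compact hloP).isBounded
  have hfinup : ∀ k, EMetric.hausdorffEdist (Pup k) PupInf ≠ ⊤ := fun k =>
    Metric.hausdorffEdist_ne_top_of_nonempty_of_bounded (pc_nonempty (hPupP k))
      (pc_nonempty hupP) (pc_compact (hPupP k)).isBounded (pc_compact hupP).isBounded
  apply Set.Subset.antisymm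
  · -- PloInf ⊆ PupInf
    intro z hz
    rw [(pc_closed hupP).mem_iff_infDist_zero (pc_nonempty hupP)]
    by_contra hne
    have hpos : 0 < Metric.infDist z PupInf :=
      lt_of_le_of_ne Metric.infDist_nonneg (Ne.symm hne)
    set η := Metric.infDist z PupInf with hη
    have hεpos : 0 < η / (4 * (RD + 1)) := by positivity
    obtain ⟨K, hK⟩ := key (η / (4 * (RD + 1))) hεpos
    obtain ⟨N1, hN1⟩ := hconv1 (η / 4) (by positivity)
    obtain ⟨N2, hN2⟩ := hconv2 (η / 4) (by positivity)
    set k := max K (max N1 N2) with hkdef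
    have hKk : K ≤ k := le_max_left _ _
    have hN1k : N1 ≤ k := (le_max_left _ _).trans (le_max_right _ _)
    have hN2k : N2 ≤ k := (le_max_right _ _).trans (le_max_right _ _)
    -- approximate z by a point of Plo k
    have hzd : Metric.infDist z (Plo k) < η / 4 := by
      have h1 := Metric.infDist_le_hausdorffDist_of_mem hz
        (by rw [EMetric.hausdorffEdist_comm]; exact hfinlo k)
      have h2 : Metric.hausdorffDist PloInf (Plo k) = Metric.hausdorffDist (Plo k) PloInf :=
        Metric.hausdorffDist_comm
      rw [h2] at h1
      exact h1.trans_lt (hN1 k hN1k)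
    obtain ⟨x, hxm, hxd⟩ := (Metric.infDist_lt_iff (pc_nonempty (hPloP k))).mp hzd
    obtain ⟨y, hym, hxy⟩ := hK k hKk x hxm
    have hyRD : ‖y‖ ≤ RD := by
      have := hDb ((hPup' k).2 hym)
      rwa [Metric.mem_closedBall, dist_zero_right] at this
    have hdxy : dist x y ≤ η / 4 := by
      rw [dist_eq_norm, hxy]
      have h1 : (1 + η / (4 * (RD + 1))) • y - y = (η / (4 * (RD + 1))) • y := by
        rw [add_smul, one_smul]
        abel
      rw [h1, norm_smul, Real.norm_eq_abs, abs_of_pos hεpos]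
      have h2 : η / (4 * (RD + 1)) * ‖y‖ ≤ η / (4 * (RD + 1)) * (RD + 1) :=
        mul_le_mul_of_nonneg_left (by linarith) hεpos.le
      have h3 : η / (4 * (RD + 1)) * (RD + 1) = η / 4 := by
        field_simp
      linarith
    have hyd : Metric.infDist y PupInf < η / 4 := by
      have h1 := Metric.infDist_le_hausdorffDist_of_mem hym (hfinup k)
      exact h1.trans_lt (hN2 k hN2k)
    have hchain : Metric.infDist z PupInf
        ≤ Metric.infDist y PupInf + dist x y + dist z x := by
      have h1 := Metric.infDist_le_infDist_add_dist (x := z) (y := x) (s := PupInf)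
      have h2 := Metric.infDist_le_infDist_add_dist (x := x) (y := y) (s := PupInf)
      linarith
    rw [← hη] at hchain
    linarith
  · -- PupInf ⊆ PloInf
    intro z hz
    rw [(pc_closed hloP).mem_iff_infDist_zero (pc_nonempty hloP)]
    by_contra hne
    have hpos : 0 < Metric.infDist z PloInf :=
      lt_of_le_of_ne Metric.infDist_nonneg (Ne.symm hne)
    set η := Metric.infDist z PloInf with hη
    obtain ⟨N1, hN1⟩ := hconv1 (η / 3) (by positivity)
    obtain ⟨N2, hN2⟩ := hconv2 (η / 3) (by positivity)
    set k := max N1 N2 with hkdef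
    have hzd : Metric.infDist z (Pup k) < η / 3 := by
      have h1 := Metric.infDist_le_hausdorffDist_of_mem hz
        (by rw [EMetric.hausdorffEdist_comm]; exact hfinup k)
      have h2 : Metric.hausdorffDist PupInf (Pup k) = Metric.hausdorffDist (Pup k) PupInf :=
        Metric.hausdorffDist_comm
      rw [h2] at h1
      exact h1.trans_lt (hN2 k (le_max_right _ _))
    obtain ⟨x, hxm, hxd⟩ := (Metric.infDist_lt_iff (pc_nonempty (hPupP k))).mp hzd
    have hxlo : x ∈ Plo k := hsub k hxm
    have h1 := Metric.infDist_le_infDist_add_dist (x := z) (y := x) (s := PloInf)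
    have h2 := Metric.infDist_le_hausdorffDist_of_mem hxlo (hfinlo k)
    have h3 := hN1 k (le_max_left _ _)
    rw [← hη] at h1
    linarith
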